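/- arXiv:1109.4020 — 2 statements merged into one kernel-verified Lean document; each statement's English description precedes it below -/
import Mathlib

section
/- Let 𝐒 be the block diagonal nonnegative operator S ⊕ I on L ⊕ M, and let K be a closed subspace contained in L. Then the shorted operator satisfies 𝐒_K = S_K P_L, i.e., 𝐒_K acts as S_K on L and as 0 on M. -/
open ContinuousLinearMap

variable {L M : Type*} [NormedAddCommGroup L] [InnerProductSpace ℂ L] [CompleteSpace L]
  [NormedAddCommGroup M] [InnerProductSpace ℂ M] [CompleteSpace M]

/-- `W` is the Kreĭn shorted operator of `S` with respect to the closed subspace `K`. -/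
def IsShortedOp {H : Type*} [NormedAddCommGroup H] [InnerProductSpace ℂ H]
    [CompleteSpace H] (S W : H →L[ℂ] H) (K : Submodule ℂ H) : Prop :=
  IsSelfAdjoint W ∧
    ∀ f : H, (inner ℂ (W f) f : ℂ).re = ⨅ φ : Kᗮ, (inner ℂ (S (f + φ)) (f + φ) : ℂ).re

/-- For a self-adjoint operator on a complex Hilbert space, the quadratic form is real. -/
lemma selfAdjoint_inner_real {H : Type*} [NormedAddCommGroup H] [InnerProductSpace ℂ H]
    [CompleteSpace H] {T : H →L[ℂ] H} (hT : IsSelfAdjoint T) (f : H) :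
    (inner ℂ (T f) f : ℂ) = ((inner ℂ (T f) f : ℂ).re : ℂ) := by
  have hsym := (ContinuousLinearMap.isSelfAdjoint_iff_isSymmetric.mp hT) f f
  have h1 : (starRingEnd ℂ) (inner ℂ (T f) f : ℂ) = (inner ℂ f (T f) : ℂ) :=
    inner_conj_symm _ _
  have h2 : (starRingEnd ℂ) (inner ℂ (T f) f : ℂ) = (inner ℂ (T f) f : ℂ) := h1.trans hsym.symm
  exact (Complex.conj_eq_iff_re.mp h2).symm

/-- Let `𝐒 = S ⊕ I` be block diagonal on the Hilbert space
`H = L ⊕₂ M` and let `K ⊆ L` be a closed subspace.  Then `𝐒_K = S_K P_L`, i.e. the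
shorted operator of `𝐒` acts as `S_K` on `L` and as `0` on `M`. -/
theorem shorted_blockDiag (S : L →L[ℂ] L) (hS : S.IsPositive)
    (K : Submodule ℂ L) (hK : IsClosed (K : Set L))
    (e : WithLp 2 (L × M) ≃L[ℂ] L × M)
    (he : ∀ x : WithLp 2 (L × M), e x = (WithLp.equiv 2 (L × M)) x)
    (bigS : WithLp 2 (L × M) →L[ℂ] WithLp 2 (L × M))
    (hbigS : bigS = (e.symm : L × M →L[ℂ] WithLp 2 (L × M)) ∘L
      (S.prodMap (1 : M →L[ℂ] M)) ∘L (e : WithLp 2 (L × M) →L[ℂ] L × M))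
    (K' : Submodule ℂ (WithLp 2 (L × M)))
    (hK' : K' = Submodule.comap (e.toLinearEquiv : WithLp 2 (L × M) →ₗ[ℂ] L × M)
      (K.prod ⊥))
    (W₀ : L →L[ℂ] L) (hW₀ : IsShortedOp S W₀ K)
    (W : WithLp 2 (L × M) →L[ℂ] WithLp 2 (L × M)) (hW : IsShortedOp bigS W K') :
    ∀ x : WithLp 2 (L × M), e (W x) = (W₀ (e x).1, 0) := by
  -- `e` is just the identity under the defeq `WithLp 2 (L × M) = L × M`
  have he' : ∀ x : WithLp 2 (L × M), e x = WithLp.ofLp x := he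
  have hsymm : ∀ y : L × M, e.symm y = WithLp.toLp 2 y := by
    intro y
    have h1 := he' (e.symm y)
    rw [e.apply_symm_apply] at h1
    exact (congrArg (WithLp.toLp 2) h1).symm
  -- nonnegativity of the quadratic form of `S`
  have hQ0 : ∀ g : L, 0 ≤ (inner ℂ (S g) g : ℂ).re := fun g => hS.re_inner_nonneg_left g
  -- the quadratic form of `bigS`
  have hform : ∀ x : WithLp 2 (L × M),
      (inner ℂ (bigS x) x : ℂ).re = (inner ℂ (S x.fst) x.fst : ℂ).re + ‖x.snd‖ ^ 2 := by
    intro x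
    have hx : bigS x = e.symm (S x.fst, x.snd) := by
      rw [hbigS]
      simp only [ContinuousLinearMap.comp_apply, ContinuousLinearMap.coe_coe,
        ContinuousLinearEquiv.coe_coe, he' x]
      rfl
    rw [hx, hsymm, WithLp.prod_inner_apply]
    have h2 : (inner ℂ (x.snd) (x.snd) : ℂ).re = ‖x.snd‖ ^ 2 := by
      simpa using inner_self_eq_norm_sq (𝕜 := ℂ) x.snd
    simp [h2]
    rw [← Complex.ofReal_pow, Complex.ofReal_re]
  -- membership in `K'`
  have hmemK' : ∀ x : WithLp 2 (L × M), x ∈ K' ↔ x.fst ∈ K ∧ x.snd = 0 := by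
    intro x
    rw [hK', Submodule.mem_comap]
    have : (e.toLinearEquiv : WithLp 2 (L × M) →ₗ[ℂ] L × M) x = e x := rfl
    rw [this, he' x, Submodule.mem_prod]
    simp [Submodule.mem_bot]
  -- membership in `K'ᗮ`
  have hmemO : ∀ x : WithLp 2 (L × M), x ∈ K'ᗮ ↔ x.fst ∈ Kᗮ := by
    intro x
    constructor
    · intro hx
      rw [Submodule.mem_orthogonal]
      intro k hk
      have hmem : (WithLp.equiv 2 (L × M)).symm (k, 0) ∈ K' := by
        rw [hmemK']
        constructor
        · simpa using hk
        · simp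
      have h0 := Submodule.inner_right_of_mem_orthogonal hmem hx
      rw [WithLp.prod_inner_apply] at h0
      simpa using h0
    · intro hx
      rw [Submodule.mem_orthogonal]
      intro u hu
      obtain ⟨hu1, hu2⟩ := (hmemK' u).1 hu
      rw [WithLp.prod_inner_apply, WithLp.ofLp_snd u, hu2]
      simp [Submodule.inner_right_of_mem_orthogonal hu1 hx]
  -- the key identity between the two quadratic forms
  have key : ∀ f : WithLp 2 (L × M),
      (inner ℂ (W f) f : ℂ).re = (inner ℂ (W₀ f.fst) f.fst : ℂ).re := by
    intro f
    rw [hW.2 f, hW₀.2 f.fst]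
    have hbdd1 : BddBelow (Set.range fun φ : ↥K'ᗮ =>
        (inner ℂ (bigS (f + φ)) (f + φ) : ℂ).re) := by
      refine ⟨0, ?_⟩
      rintro _ ⟨φ, rfl⟩
      dsimp only
      rw [hform]
      exact add_nonneg (hQ0 _) (sq_nonneg _)
    have hbdd2 : BddBelow (Set.range fun ψ : ↥Kᗮ =>
        (inner ℂ (S (f.fst + ψ)) (f.fst + ψ) : ℂ).re) := by
      refine ⟨0, ?_⟩
      rintro _ ⟨ψ, rfl⟩
      dsimp only
      exact hQ0 _
    apply le_antisymm
    · apply le_ciInf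
      intro ψ
      have hmem : (WithLp.equiv 2 (L × M)).symm ((ψ : L), -f.snd) ∈ K'ᗮ := by
        rw [hmemO]
        simpa using ψ.2
      refine le_trans (ciInf_le hbdd1 ⟨_, hmem⟩) ?_
      rw [hform]
      have h1 : ((f + (WithLp.equiv 2 (L × M)).symm ((ψ : L), -f.snd)).fst : L)
          = f.fst + (ψ : L) := rfl
      have h2 : ((f + (WithLp.equiv 2 (L × M)).symm ((ψ : L), -f.snd)).snd : M)
          = f.snd + -f.snd := rfl
      rw [h1, h2]
      simp
    · apply le_ciInf
      intro φ
      have hmem : ((φ : WithLp 2 (L × M)).fst : L) ∈ Kᗮ := (hmemO _).1 φ.2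
      rw [hform]
      have h1 : ((f + (φ : WithLp 2 (L × M))).fst : L) = f.fst + (φ : WithLp 2 (L × M)).fst := rfl
      rw [h1]
      refine le_trans (ciInf_le hbdd2 ⟨_, hmem⟩) ?_
      exact le_add_of_nonneg_right (sq_nonneg _)
  -- the candidate operator
  set V : WithLp 2 (L × M) →L[ℂ] WithLp 2 (L × M) :=
    (e.symm : L × M →L[ℂ] WithLp 2 (L × M)) ∘L
      (W₀.prodMap (0 : M →L[ℂ] M)) ∘L (e : WithLp 2 (L × M) →L[ℂ] L × M) with hV
  have hVapp : ∀ x : WithLp 2 (L × M), V x = e.symm (W₀ x.fst, 0) := by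
    intro x
    rw [hV]
    simp only [ContinuousLinearMap.comp_apply, ContinuousLinearMap.coe_coe,
      ContinuousLinearEquiv.coe_coe, he' x]
    rfl
  have hVinner : ∀ x y : WithLp 2 (L × M),
      (inner ℂ (V x) y : ℂ) = (inner ℂ (W₀ x.fst) y.fst : ℂ) := by
    intro x y
    rw [hVapp, hsymm, WithLp.prod_inner_apply]
    simp
  -- V is self-adjoint
  have hW₀sym := ContinuousLinearMap.isSelfAdjoint_iff_isSymmetric.mp hW₀.1
  have hVsa : IsSelfAdjoint V := by
    rw [ContinuousLinearMap.isSelfAdjoint_iff_isSymmetric]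
    intro x y
    show (inner ℂ (V x) y : ℂ) = (inner ℂ x (V y) : ℂ)
    rw [hVinner]
    have h2 : (inner ℂ x (V y) : ℂ) = (inner ℂ x.fst (W₀ y.fst) : ℂ) := by
      rw [← inner_conj_symm, hVinner, inner_conj_symm]
    rw [h2]
    exact hW₀sym x.fst y.fst
  -- equality of quadratic forms (as complex numbers)
  have hquad : ∀ f : WithLp 2 (L × M), (inner ℂ (W f) f : ℂ) = (inner ℂ (V f) f : ℂ) := by
    intro f
    rw [selfAdjoint_inner_real hW.1 f, selfAdjoint_inner_real hVsa f, key f]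
    congr 1
    rw [hVinner]
  -- conclude W = V
  have hWV : ∀ x : WithLp 2 (L × M), W x = V x := by
    have h0 : ((W : WithLp 2 (L × M) →ₗ[ℂ] WithLp 2 (L × M)) -
        (V : WithLp 2 (L × M) →ₗ[ℂ] WithLp 2 (L × M))) = 0 := by
      rw [← inner_map_self_eq_zero]
      intro x
      rw [LinearMap.sub_apply, inner_sub_left]
      simp only [ContinuousLinearMap.coe_coe]
      rw [hquad x, sub_self]
    intro x
    have := LinearMap.congr_fun h0 x
    simpa [sub_eq_zero] using this
  intro x
  rw [hWV x, hVapp x, he' (e.symm (W₀ x.fst, 0)), hsymm]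
  have : (e x).1 = x.fst := by rw [he' x]; rfl
  rw [this]
end

section
/- Let T_N be the lower triangular (N+1)×(N+1) block Toeplitz contraction built from operators C₀,...,C_N : M → N, and identify M with the first coordinate subspace of M^{N+1}. Then the sequence of restricted shorted operators (D²_{T_k})_M restricted to M is non-increasing in k: (D²_{T_k})_M ↾ M ≥ (D²_{T_{k+1}})_M ↾ M for k = 0, ..., N-1. -/
set_option synthInstance.maxHeartbeats 400000
open ContinuousLinearMap

variable {M N : Type*} [NormedAddCommGroup M] [InnerProductSpace ℂ M] [CompleteSpace M]
  [NormedAddCommGroup N] [InnerProductSpace ℂ N] [CompleteSpace N]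


instance piLpCompleteSpace {ι : Type*} [Fintype ι] (E : ι → Type*)
    [∀ i, NormedAddCommGroup (E i)] [∀ i, CompleteSpace (E i)] :
    CompleteSpace (PiLp 2 E) :=
  inferInstance

/-- The first coordinate copy of `M` inside `M^{k+1}`. -/
def firstCoord (M : Type*) [NormedAddCommGroup M] [InnerProductSpace ℂ M] (k : ℕ) :
    Submodule ℂ (PiLp 2 fun _ : Fin (k + 1) => M) where
  carrier := {f | ∀ i : Fin (k + 1), i ≠ 0 → f i = 0}
  add_mem' := by
    intro a b ha hb i hi
    show a i + b i = 0
    rw [ha i hi, hb i hi, add_zero]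
  zero_mem' := fun i _ => rfl
  smul_mem' := by
    intro c a ha i hi
    show c • a i = 0
    rw [ha i hi, smul_zero]

/-- The embedding of `M` onto the first coordinate of `M^{k+1}`. -/
def emb (M : Type*) [NormedAddCommGroup M] [InnerProductSpace ℂ M] (k : ℕ) (m : M) :
    PiLp 2 fun _ : Fin (k + 1) => M :=
  WithLp.toLp 2 (fun i => if i = 0 then m else 0)

/-- Extension by zero from `M^{k+1}` to `M^{l+1}`. -/
def extz {E : Type*} [NormedAddCommGroup E] {k l : ℕ} (h : k ≤ l)
    (g : PiLp 2 fun _ : Fin (k + 1) => E) : PiLp 2 fun _ : Fin (l + 1) => E :=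
  WithLp.toLp 2 (fun i => if h' : (i : ℕ) < k + 1 then g ⟨i, h'⟩ else 0)

lemma extz_norm_sq {E : Type*} [NormedAddCommGroup E] {k l : ℕ} (h : k ≤ l)
    (g : PiLp 2 fun _ : Fin (k + 1) => E) : ‖extz h g‖ ^ 2 = ‖g‖ ^ 2 := by
  rw [PiLp.norm_sq_eq_of_L2, PiLp.norm_sq_eq_of_L2]
  set F : ℕ → ℝ := fun i => if h' : i < k + 1 then ‖g ⟨i, h'⟩‖ ^ 2 else 0 with hF
  have h1 : ∀ i : Fin (l + 1), ‖extz h g i‖ ^ 2 = F (i : ℕ) := by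
    intro i
    simp only [extz, hF, PiLp.toLp_apply]
    split <;> simp
  have h2 : ∀ i : Fin (k + 1), ‖g i‖ ^ 2 = F (i : ℕ) := by
    intro i
    simp only [hF, i.isLt, dif_pos, Fin.eta]
  simp_rw [h1, h2]
  rw [Fin.sum_univ_eq_sum_range F (l + 1), Fin.sum_univ_eq_sum_range F (k + 1)]
  refine (Finset.sum_subset (by intro x hx; simp at hx ⊢; omega) ?_).symm
  intro x _ hx
  simp only [Finset.mem_range, not_lt] at hx
  simp only [hF, dif_neg (by omega : ¬ x < k + 1)]

section Toeplitz

variable (C : ℕ → (M →L[ℂ] N))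

lemma toeplitz_entry {k l : ℕ} (h : k ≤ l)
    (T : (k : ℕ) → (PiLp 2 fun _ : Fin (k + 1) => M) →L[ℂ]
      (PiLp 2 fun _ : Fin (k + 1) => N))
    (hToe : ∀ (k : ℕ) (f : PiLp 2 fun _ : Fin (k + 1) => M) (i : Fin (k + 1)),
      T k f i = ∑ j : Fin (k + 1), if (j : ℕ) ≤ (i : ℕ) then C ((i : ℕ) - (j : ℕ)) (f j) else 0)
    (g : PiLp 2 fun _ : Fin (k + 1) => M) (i : Fin (l + 1)) (hi : (i : ℕ) ≤ k) :
    T l (extz h g) i = T k g ⟨i, by omega⟩ := by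
  rw [hToe, hToe]
  set F : ℕ → N := fun j =>
    if j ≤ (i : ℕ) then C ((i : ℕ) - j) (if h' : j < k + 1 then g ⟨j, h'⟩ else 0) else 0 with hF
  have h1 : ∀ j : Fin (l + 1),
      (if (j : ℕ) ≤ (i : ℕ) then C ((i : ℕ) - (j : ℕ)) (extz h g j) else 0) = F (j : ℕ) := by
    intro j; simp only [hF, extz, PiLp.toLp_apply]
  have h2 : ∀ j : Fin (k + 1),
      (if (j : ℕ) ≤ ((⟨i, by omega⟩ : Fin (k + 1)) : ℕ) then
        C (((⟨i, by omega⟩ : Fin (k + 1)) : ℕ) - (j : ℕ)) (g j) else 0) = F (j : ℕ) := by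
    intro j
    simp only [hF, j.isLt, dif_pos, Fin.eta]
  simp_rw [h1, h2]
  rw [Fin.sum_univ_eq_sum_range F (l + 1), Fin.sum_univ_eq_sum_range F (k + 1)]
  refine (Finset.sum_subset (by intro x hx; simp at hx ⊢; omega) ?_).symm
  intro x _ hx
  simp only [Finset.mem_range, not_lt] at hx
  simp only [hF, if_neg (by omega : ¬ x ≤ (i : ℕ))]

lemma toeplitz_norm_le {k l : ℕ} (h : k ≤ l)
    (T : (k : ℕ) → (PiLp 2 fun _ : Fin (k + 1) => M) →L[ℂ]
      (PiLp 2 fun _ : Fin (k + 1) => N))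
    (hToe : ∀ (k : ℕ) (f : PiLp 2 fun _ : Fin (k + 1) => M) (i : Fin (k + 1)),
      T k f i = ∑ j : Fin (k + 1), if (j : ℕ) ≤ (i : ℕ) then C ((i : ℕ) - (j : ℕ)) (f j) else 0)
    (g : PiLp 2 fun _ : Fin (k + 1) => M) :
    ‖T k g‖ ^ 2 ≤ ‖T l (extz h g)‖ ^ 2 := by
  rw [PiLp.norm_sq_eq_of_L2, PiLp.norm_sq_eq_of_L2]
  set G : ℕ → ℝ := fun i =>
    if h' : i < l + 1 then ‖T l (extz h g) ⟨i, h'⟩‖ ^ 2 else 0 with hG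
  have h1 : ∀ i : Fin (l + 1), ‖T l (extz h g) i‖ ^ 2 = G (i : ℕ) := by
    intro i; simp only [hG, i.isLt, dif_pos, Fin.eta]
  have h2 : ∀ i : Fin (k + 1), ‖T k g i‖ ^ 2 = G (i : ℕ) := by
    intro i
    have hlt : (i : ℕ) < l + 1 := by omega
    simp only [hG, hlt, dif_pos]
    rw [toeplitz_entry C h T hToe g ⟨i, hlt⟩ (Nat.lt_succ_iff.mp i.isLt)]
  simp_rw [h1, h2]
  rw [Fin.sum_univ_eq_sum_range G (l + 1), Fin.sum_univ_eq_sum_range G (k + 1)]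
  refine Finset.sum_le_sum_of_subset_of_nonneg (by intro x hx; simp at hx ⊢; omega) ?_
  intro x _ _
  simp only [hG]
  split
  · positivity
  · exact le_rfl

end Toeplitz

lemma qform {H H' : Type*} [NormedAddCommGroup H] [InnerProductSpace ℂ H] [CompleteSpace H]
    [NormedAddCommGroup H'] [InnerProductSpace ℂ H'] [CompleteSpace H']
    (T : H →L[ℂ] H') (x : H) :
    (inner ℂ ((1 - ContinuousLinearMap.adjoint T ∘L T) x) x : ℂ).re = ‖x‖ ^ 2 - ‖T x‖ ^ 2 := by
  have h : (1 - ContinuousLinearMap.adjoint T ∘L T) x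
      = x - ContinuousLinearMap.adjoint T (T x) := rfl
  rw [h, inner_sub_left, Complex.sub_re, adjoint_inner_left,
    ← RCLike.re_to_complex, ← RCLike.re_to_complex, inner_self_eq_norm_sq,
    inner_self_eq_norm_sq]

lemma extz_add {E : Type*} [NormedAddCommGroup E] {k l : ℕ} (h : k ≤ l)
    (a b : PiLp 2 fun _ : Fin (k + 1) => E) :
    extz h (a + b) = extz h a + extz h b := by
  ext i
  show extz h (a + b) i = extz h a i + extz h b i
  simp only [extz, PiLp.toLp_apply]
  split
  · rfl
  · rw [add_zero]

lemma extz_emb (k : ℕ) (m : M) :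
    extz (Nat.le_succ k) (emb M k m) = emb M (k + 1) m := by
  ext i
  show extz (Nat.le_succ k) (emb M k m) i = emb M (k + 1) m i
  simp only [extz, emb, PiLp.toLp_apply]
  by_cases hi : i = 0
  · subst hi
    rw [dif_pos (by simp : ((0 : Fin (k + 2)) : ℕ) < k + 1), if_pos rfl, if_pos]
    rfl
  · rw [if_neg hi]
    split
    · rw [if_neg]
      intro h0
      exact hi (by rw [Fin.ext_iff] at h0 ⊢; simpa using h0)
    · rfl

lemma mem_orthogonal_firstCoord {k : ℕ} (φ : PiLp 2 fun _ : Fin (k + 1) => M) :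
    φ ∈ (firstCoord M k)ᗮ ↔ φ 0 = 0 := by
  constructor
  · intro h
    have hmem : emb M k (φ 0) ∈ firstCoord M k := by
      intro i hi
      simp [emb, hi]
    have h0 := h (emb M k (φ 0)) hmem
    rw [PiLp.inner_apply] at h0
    rw [Finset.sum_eq_single (0 : Fin (k + 1))] at h0
    · simpa [emb, inner_self_eq_zero] using h0
    · intro i _ hi
      simp [emb, hi]
    · simp
  · intro h0 u hu
    rw [PiLp.inner_apply]
    refine Finset.sum_eq_zero fun i _ => ?_
    by_cases hi : i = 0
    · subst hi; rw [h0, inner_zero_right]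
    · rw [hu i hi, inner_zero_left]

set_option maxHeartbeats 1000000 in
/-- Let `T_N` be the lower triangular block Toeplitz contraction
built from `C₀, …, C_N : M → N`.  Then the sequence of shorted operators
`(D²_{T_k})_M ↾ M` is non-increasing in `k`. -/
theorem shorted_toeplitz_antitone (C : ℕ → (M →L[ℂ] N)) (Nn : ℕ)
    (T : (k : ℕ) → (PiLp 2 fun _ : Fin (k + 1) => M) →L[ℂ]
      (PiLp 2 fun _ : Fin (k + 1) => N))
    (hToe : ∀ (k : ℕ) (f : PiLp 2 fun _ : Fin (k + 1) => M) (i : Fin (k + 1)),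
      T k f i = ∑ j : Fin (k + 1), if (j : ℕ) ≤ (i : ℕ) then C ((i : ℕ) - (j : ℕ)) (f j) else 0)
    (hTc : ‖T Nn‖ ≤ 1)
    (W : (k : ℕ) → (PiLp 2 fun _ : Fin (k + 1) => M) →L[ℂ]
      (PiLp 2 fun _ : Fin (k + 1) => M))
    (hW : ∀ k, IsShortedOp (1 - (ContinuousLinearMap.adjoint (T k)) ∘L T k)
      (W k) (firstCoord M k)) :
    ∀ k : ℕ, k + 1 ≤ Nn → ∀ m : M,
      (inner ℂ (W (k + 1) (emb M (k + 1) m)) (emb M (k + 1) m) : ℂ).re ≤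
        (inner ℂ (W k (emb M k m)) (emb M k m) : ℂ).re := by
  intro k hk m
  obtain ⟨-, hWk⟩ := hW k
  obtain ⟨-, hWk1⟩ := hW (k + 1)
  rw [hWk, hWk1]
  have hk1 : k ≤ k + 1 := Nat.le_succ k
  -- squared contraction bound at level k+1
  have hcontr : ∀ f : PiLp 2 fun _ : Fin (k + 1 + 1) => M, ‖T (k + 1) f‖ ^ 2 ≤ ‖f‖ ^ 2 := by
    intro f
    have h1 : ‖T (k + 1) f‖ ^ 2 ≤ ‖T Nn (extz hk f)‖ ^ 2 := toeplitz_norm_le C hk T hToe f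
    have h2 : ‖T Nn (extz hk f)‖ ≤ ‖extz hk f‖ := by
      calc ‖T Nn (extz hk f)‖ ≤ ‖T Nn‖ * ‖extz hk f‖ := le_opNorm _ _
        _ ≤ 1 * ‖extz hk f‖ := mul_le_mul_of_nonneg_right hTc (norm_nonneg _)
        _ = ‖extz hk f‖ := one_mul _
    have h3 : ‖T Nn (extz hk f)‖ ^ 2 ≤ ‖extz hk f‖ ^ 2 :=
      pow_le_pow_left₀ (norm_nonneg _) h2 2
    have h4 := extz_norm_sq hk f
    linarith
  refine le_ciInf fun φ => ?_
  have hmem : extz hk1 (φ : PiLp 2 fun _ : Fin (k + 1) => M) ∈ (firstCoord M (k + 1))ᗮ := by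
    rw [mem_orthogonal_firstCoord]
    have h0 : (φ : PiLp 2 fun _ : Fin (k + 1) => M) 0 = 0 :=
      (mem_orthogonal_firstCoord _).mp φ.2
    show extz hk1 (φ : PiLp 2 fun _ : Fin (k + 1) => M) 0 = 0
    simp only [extz, PiLp.toLp_apply]
    rw [dif_pos (by simp : ((0 : Fin (k + 2)) : ℕ) < k + 1)]
    exact h0
  have hbdd : BddBelow (Set.range fun ψ : (firstCoord M (k + 1))ᗮ =>
      (inner ℂ ((1 - ContinuousLinearMap.adjoint (T (k + 1)) ∘L T (k + 1))
        (emb M (k + 1) m + ↑ψ)) (emb M (k + 1) m + ↑ψ) : ℂ).re) := by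
    refine ⟨0, ?_⟩
    rintro x ⟨ψ, rfl⟩
    dsimp only
    rw [qform]
    have := hcontr (emb M (k + 1) m + ↑ψ)
    linarith
  refine ciInf_le_of_le hbdd ⟨extz hk1 φ, hmem⟩ ?_
  dsimp only
  have he : emb M (k + 1) m + extz hk1 (φ : PiLp 2 fun _ : Fin (k + 1) => M)
      = extz hk1 (emb M k m + (φ : PiLp 2 fun _ : Fin (k + 1) => M)) := by
    rw [extz_add, extz_emb]
  rw [qform, qform, he, extz_norm_sq]
  have := toeplitz_norm_le C hk1 T hToe (emb M k m + (φ : PiLp 2 fun _ : Fin (k + 1) => M))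
  linarith
end
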